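/- arXiv:2005.00445 — 2 statements merged into one kernel-verified Lean document; each statement's English description precedes it below -/
import Mathlib

section
/- Consider two items of unit size with cache capacity C = 2 and backhaul capacity L = 1 (one item updated per slot). Item 1 has utility f_1(0) = 2k and f_1(a) = 0 for a ≥ 1, where k > 1. Item 2 has utility f_2(a) = k for a ≤ t and f_2(a) = 0 for a > t. Over a horizon of T = t slots, the greedy schedule that updates item 1 in every slot achieves total utility 2kt, while the schedule that caches item 2 in slot 1 and then downloads and keeps updating item 1 in slots 2,...,t achieves total utility 3kt - 2k. Hence for t > 2 the greedy schedule is strictly suboptimal. -/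
/-- Two unit-size items, `C = 2`, `L = 1`, horizon `T = t ≥ 1`.
Item 1: `f₁(0) = 2k`, `f₁(a) = 0` for `a ≥ 1` (`k > 1`).
Item 2: `f₂(a) = k` for `a ≤ t`, else `0`.
The greedy schedule (update item 1 every slot) earns `2kt`; the schedule caching
item 2 in slot 1 (ages `0,…,t-1` thereafter) and downloading and updating item 1
in slots `2,…,t` earns `kt + 2k(t-1) = 3kt - 2k`; hence greedy is strictly
suboptimal for `t > 2`. -/
theorem greedy_counterexample (k : ℝ) (hk : 1 < k) (t : ℕ) (ht : 1 ≤ t) :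
    let f1 : ℕ → ℝ := fun a => if a = 0 then 2 * k else 0
    let f2 : ℕ → ℝ := fun a => if a ≤ t then k else 0
    (∑ _s ∈ Finset.Icc 1 t, f1 0) = 2 * k * t ∧
    ((∑ s ∈ Finset.Icc 1 t, f2 (s - 1)) + ∑ _s ∈ Finset.Icc 2 t, f1 0) = 3 * k * t - 2 * k ∧
    (2 < t → 2 * k * t < 3 * k * t - 2 * k) := by
  intro f1 f2
  have card1 : (Finset.Icc 1 t).card = t := by rw [Nat.card_Icc]; omega
  have card2 : (Finset.Icc 2 t).card = t - 1 := by rw [Nat.card_Icc]; omega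
  have h1 : (∑ _s ∈ Finset.Icc 1 t, f1 0) = 2 * k * t := by
    simp [f1, Finset.sum_const, card1, mul_comm]
  refine ⟨h1, ?_, ?_⟩
  · have hsum2 : (∑ s ∈ Finset.Icc 1 t, f2 (s - 1)) = k * t := by
      rw [Finset.sum_congr rfl (fun s hs => ?_), Finset.sum_const, card1, nsmul_eq_mul,
        mul_comm]
      have := Finset.mem_Icc.mp hs
      simp only [f2, if_pos (by omega : s - 1 ≤ t)]
    have hsum3 : (∑ _s ∈ Finset.Icc 2 t, f1 0) = 2 * k * (t - 1 : ℕ) := by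
      simp [f1, Finset.sum_const, card2, mul_comm]
    rw [hsum2, hsum3]
    have : ((t - 1 : ℕ) : ℝ) = (t : ℝ) - 1 := by
      rw [Nat.cast_sub ht]; simp
    rw [this]; ring
  · intro ht2
    have : (2 : ℝ) < t := by exact_mod_cast ht2
    nlinarith
end

section
/- In the uniform-size caching problem with nondecreasing-in-freshness utilities (f_i monotonically decreasing in age, f_i ≥ 0), if in some slot fewer than min(L, I - number of items updated) items are downloaded and the backhaul capacity is not fully used while some item is outside the cache or has positive age, then the schedule can be modified to use the full backhaul capacity without decreasing total utility. In particular there exists an optimal schedule in which exactly min(L, I) items are downloaded in every slot. -/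
/-- A feasible uniform-size caching schedule: `H t` is the cache content of slot `t`,
`D t` the items downloaded (age 0) in slot `t`. -/
structure USchedule (ι : Type*) [Fintype ι] [DecidableEq ι] (C L : ℕ) where
  H : ℕ → Finset ι
  D : ℕ → Finset ι
  hD : ∀ t, D t ⊆ H t
  hC : ∀ t, (H t).card ≤ C
  hL : ∀ t, (D t).card ≤ L
  hCont : ∀ t, H (t + 1) \ D (t + 1) ⊆ H t
  hInit : H 0 = ∅

/-- Age of item `i` in slot `t`: `0` if downloaded in slot `t`, else previous age + 1. -/
def uage {ι : Type*} [Fintype ι] [DecidableEq ι] {C L : ℕ}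
    (sch : USchedule ι C L) (i : ι) : ℕ → ℕ
  | 0 => 0
  | t + 1 => if i ∈ sch.D (t + 1) then 0 else uage sch i t + 1

/-- Total utility over slots `1,…,T`. -/
noncomputable def uutil {ι : Type*} [Fintype ι] [DecidableEq ι] {C L : ℕ}
    (f : ι → ℕ → ℝ) (T : ℕ) (sch : USchedule ι C L) : ℝ :=
  ∑ t ∈ Finset.Icc 1 T, ∑ i ∈ sch.H t, f i (uage sch i t)

/-- Auxiliary: a download set `A ⊆ B` (cache) can be enlarged to exactly `L` items,
preferring items of `B`, keeping the cache within capacity `C`. -/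
lemma exists_full_download {ι : Type*} [Fintype ι] [DecidableEq ι] {L C : ℕ}
    (hLC : L ≤ C) (hCI : C ≤ Fintype.card ι) (A B : Finset ι)
    (hAB : A ⊆ B) (hA : A.card ≤ L) (hB : B.card ≤ C) :
    ∃ E : Finset ι, A ⊆ E ∧ E.card = L ∧ (B ∪ E).card ≤ C := by
  obtain ⟨E₀, hAE₀, hE₀B, hE₀c⟩ := Finset.exists_subsuperset_card_eq hAB
    (le_min hA (Finset.card_le_card hAB)) (min_le_right _ _)
  obtain ⟨E, hE₀E, -, hEc⟩ := Finset.exists_subsuperset_card_eq (n := L) (Finset.subset_univ E₀)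
    (by rw [hE₀c]; exact min_le_left _ _)
    (by rw [Finset.card_univ]; exact hLC.trans hCI)
  refine ⟨E, hAE₀.trans hE₀E, hEc, ?_⟩
  rcases le_or_gt L B.card with h | h
  · have hE₀L : E₀.card = L := by rw [hE₀c, min_eq_left h]
    have : E₀ = E := Finset.eq_of_subset_of_card_le hE₀E (by rw [hEc, hE₀L])
    have hEB : E ⊆ B := this ▸ hE₀B
    rwa [Finset.union_eq_left.mpr hEB]
  · have hE₀B' : E₀ = B := Finset.eq_of_subset_of_card_le hE₀B
      (by rw [hE₀c, min_eq_right h.le])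
    have hBE : B ⊆ E := hE₀B' ▸ hE₀E
    rw [Finset.union_eq_right.mpr hBE, hEc]
    exact hLC

/-- with nonincreasing, nonnegative utilities and `1 ≤ L ≤ C ≤ I`,
any schedule can be modified, without decreasing total utility, into one downloading
exactly `min(L, I)` items in every slot; in particular there exists an optimal
schedule downloading exactly `min(L, I)` items in every slot. -/
theorem full_backhaul_wlog
    (ι : Type*) [Fintype ι] [DecidableEq ι] (C L T : ℕ)
    (hL : 1 ≤ L) (hLC : L ≤ C) (hCI : C ≤ Fintype.card ι)
    (f : ι → ℕ → ℝ)
    (hmono : ∀ i a a', a ≤ a' → f i a' ≤ f i a)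
    (hnn : ∀ i a, 0 ≤ f i a) :
    (∀ sch : USchedule ι C L, ∃ sch' : USchedule ι C L,
        uutil f T sch ≤ uutil f T sch' ∧
        ∀ t, 1 ≤ t → t ≤ T → (sch'.D t).card = min L (Fintype.card ι)) ∧
    (∃ sch : USchedule ι C L,
        (∀ sch' : USchedule ι C L, uutil f T sch' ≤ uutil f T sch) ∧
        ∀ t, 1 ≤ t → t ≤ T → (sch.D t).card = min L (Fintype.card ι)) := by
  classical
  have hLI : L ≤ Fintype.card ι := hLC.trans hCI
  have part1 : ∀ sch : USchedule ι C L, ∃ sch' : USchedule ι C L,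
      uutil f T sch ≤ uutil f T sch' ∧
      ∀ t, 1 ≤ t → t ≤ T → (sch'.D t).card = min L (Fintype.card ι) := by
    intro sch
    have hex : ∀ t, ∃ Et : Finset ι, sch.D t ⊆ Et ∧ (sch.H t ∪ Et).card ≤ C ∧
        (t = 0 → Et = ∅) ∧ (t ≠ 0 → Et.card = L) := by
      intro t
      rcases eq_or_ne t 0 with rfl | ht
      · refine ⟨∅, ?_, ?_, fun _ => rfl, fun h => absurd rfl h⟩
        · exact sch.hInit ▸ sch.hD 0
        · simpa using sch.hC 0
      · obtain ⟨Et, h1, h2, h3⟩ := exists_full_download hLC hCI _ _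
          (sch.hD t) (sch.hL t) (sch.hC t)
        exact ⟨Et, h1, h3, fun h => absurd h ht, fun _ => h2⟩
    choose E hE1 hE2 hE0 hEL using hex
    have hD' : ∀ t, E t ⊆ sch.H t ∪ E t := fun t => Finset.subset_union_right
    have hL' : ∀ t, (E t).card ≤ L := by
      intro t
      rcases eq_or_ne t 0 with rfl | ht
      · simp [hE0 0 rfl]
      · exact (hEL t ht).le
    have hCont' : ∀ t, (sch.H (t + 1) ∪ E (t + 1)) \ E (t + 1) ⊆ sch.H t ∪ E t := by
      intro t x hx
      obtain ⟨hx1, hx2⟩ := Finset.mem_sdiff.mp hx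
      have hxH : x ∈ sch.H (t + 1) := (Finset.mem_union.mp hx1).resolve_right hx2
      have hxD : x ∉ sch.D (t + 1) := fun h => hx2 (hE1 (t + 1) h)
      exact Finset.mem_union_left _ (sch.hCont t (Finset.mem_sdiff.mpr ⟨hxH, hxD⟩))
    have hInit' : sch.H 0 ∪ E 0 = ∅ := by simp [sch.hInit, hE0 0 rfl]
    set sch' : USchedule ι C L :=
      ⟨fun t => sch.H t ∪ E t, E, hD', hE2, hL', hCont', hInit'⟩ with hsch'
    have hDeq : sch'.D = E := rfl
    have hHeq : sch'.H = fun t => sch.H t ∪ E t := rfl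
    have hage : ∀ i t, uage sch' i t ≤ uage sch i t := by
      intro i t
      induction t with
      | zero => exact le_refl _
      | succ s ih =>
        by_cases h : i ∈ sch'.D (s + 1)
        · simp only [uage, if_pos h]
          exact Nat.zero_le _
        · have h2 : i ∉ sch.D (s + 1) := fun hh => h (by rw [hDeq]; exact hE1 (s + 1) hh)
          simp only [uage, if_neg h, if_neg h2]
          exact Nat.succ_le_succ ih
    refine ⟨sch', ?_, ?_⟩
    · unfold uutil
      apply Finset.sum_le_sum
      intro t _
      calc ∑ i ∈ sch.H t, f i (uage sch i t)
          ≤ ∑ i ∈ sch.H t, f i (uage sch' i t) :=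
            Finset.sum_le_sum fun i _ => hmono i _ _ (hage i t)
        _ ≤ ∑ i ∈ sch'.H t, f i (uage sch' i t) := by
            apply Finset.sum_le_sum_of_subset_of_nonneg
            · rw [hHeq]; exact Finset.subset_union_left
            · exact fun i _ _ => hnn i _
    · intro t ht1 _
      rw [hDeq, hEL t (by omega), min_eq_left hLI]
  refine ⟨part1, ?_⟩
  -- existence of an optimal schedule: utility factors through a finite type
  set Φ : USchedule ι C L → (Fin (T + 1) → Finset ι) × (Fin (T + 1) → Finset ι) :=
    fun s => (fun t => s.H t, fun t => s.D t) with hΦ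
  have hFT : Function.FactorsThrough (uutil (C := C) (L := L) f T) Φ := by
    intro s1 s2 h
    rw [hΦ] at h
    simp only [Prod.mk.injEq, funext_iff] at h
    obtain ⟨hH, hDh⟩ := h
    have hage : ∀ i (t : ℕ), t ≤ T → uage s1 i t = uage s2 i t := by
      intro i t
      induction t with
      | zero => intro _; rfl
      | succ s ih =>
        intro hs
        have hDs : s1.D (s + 1) = s2.D (s + 1) := hDh ⟨s + 1, by omega⟩
        simp only [uage, hDs]
        rw [ih (by omega)]
    unfold uutil
    apply Finset.sum_congr rfl
    intro t ht
    rw [Finset.mem_Icc] at ht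
    have hHt : s1.H t = s2.H t := hH ⟨t, by omega⟩
    rw [hHt]
    exact Finset.sum_congr rfl fun i _ => by rw [hage i t ht.2]
  have hfin : (Set.range (uutil (C := C) (L := L) f T)).Finite := by
    have hsub : Set.range (uutil (C := C) (L := L) f T) ⊆
        Set.range (Function.extend Φ (uutil (C := C) (L := L) f T) 0) := by
      rintro x ⟨s, rfl⟩
      exact ⟨Φ s, hFT.extend_apply 0 s⟩
    exact (Set.finite_range _).subset hsub
  have sch0 : USchedule ι C L :=
    ⟨fun _ => ∅, fun _ => ∅, fun _ => Finset.Subset.refl _, fun _ => by simp,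
      fun _ => by simp, fun _ => by simp, rfl⟩
  have hne : (Set.range (uutil (C := C) (L := L) f T)).Nonempty := ⟨_, sch0, rfl⟩
  have hSne : hfin.toFinset.Nonempty := by
    rw [Set.Finite.toFinset_nonempty]; exact hne
  obtain ⟨sch, hsch⟩ : ∃ s, uutil f T s = hfin.toFinset.max' hSne := by
    have hm := hfin.toFinset.max'_mem hSne
    rw [Set.Finite.mem_toFinset] at hm
    exact hm
  have hopt : ∀ s' : USchedule ι C L, uutil f T s' ≤ uutil f T sch := by
    intro s'
    rw [hsch]
    exact hfin.toFinset.le_max' _ (by rw [Set.Finite.mem_toFinset]; exact ⟨s', rfl⟩)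
  obtain ⟨sch', h1, h2⟩ := part1 sch
  exact ⟨sch', fun s'' => (hopt s'').trans h1, h2⟩
end
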